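/- Let α₀, α₁ ∈ ℝ and β₁, β₂ > 0 with β₂ > |α₀| and β₁ ≤ 2β₂. Then there exist a frequency ω > 0 and nonnegative delays τ₁ ≥ 0, τ₂ ≥ 0 such that χ(iω) = 0; i.e., the critical (Hopf) curve of the two-delay system is nonempty in the closed positive quadrant of the (τ₁, τ₂)-plane. -/

import Mathlib

/-- The characteristic function `χ(λ) = λ² + α₁λ + α₀ + β₁·exp(−λτ₁) + β₂·exp(−λτ₂)`
of the linearized two-delay glucose–insulin model. -/
noncomputable def chi (α₀ α₁ β₁ β₂ τ₁ τ₂ : ℝ) (lam : ℂ) : ℂ :=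
  lam ^ 2 + (α₁ : ℂ) * lam + (α₀ : ℂ) + (β₁ : ℂ) * Complex.exp (-lam * (τ₁ : ℂ))
    + (β₂ : ℂ) * Complex.exp (-lam * (τ₂ : ℂ))

/-- Any unit complex number can be realized as `exp(-(iω)τ)` with `τ ≥ 0`. -/
lemma exists_tau_unit (ω : ℝ) (hω : 0 < ω) (u : ℂ) (hu : ‖u‖ = 1) :
    ∃ τ : ℝ, 0 ≤ τ ∧ Complex.exp (-(Complex.I * (ω : ℂ)) * (τ : ℂ)) = u := by
  refine ⟨(2 * Real.pi - u.arg) / ω, ?_, ?_⟩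
  · apply div_nonneg _ hω.le
    have h1 := Complex.arg_le_pi u
    have h2 := Real.pi_pos
    linarith
  · have hωne : (ω : ℂ) ≠ 0 := by exact_mod_cast hω.ne'
    have hexp : -(Complex.I * (ω : ℂ)) * (((2 * Real.pi - u.arg) / ω : ℝ) : ℂ)
        = (u.arg : ℂ) * Complex.I - 2 * (Real.pi : ℂ) * Complex.I := by
      push_cast
      field_simp
      ring
    rw [hexp, Complex.exp_sub, Complex.exp_two_pi_mul_I, div_one]
    have := Complex.norm_mul_exp_arg_mul_I u
    rw [hu] at this
    simpa using this

theorem stmt10 (α₀ α₁ β₁ β₂ : ℝ) (hβ₁ : 0 < β₁) (hβ₂ : 0 < β₂)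
    (h₁ : |α₀| < β₂) (h₂ : β₁ ≤ 2 * β₂) :
    ∃ ω τ₁ τ₂ : ℝ, 0 < ω ∧ 0 ≤ τ₁ ∧ 0 ≤ τ₂ ∧
      chi α₀ α₁ β₁ β₂ τ₁ τ₂ (Complex.I * (ω : ℂ)) = 0 := by
  have habs0 : |α₀| ≥ α₀ := le_abs_self α₀
  have habs0' : |α₀| ≥ -α₀ := neg_le_abs α₀
  have habsnn : 0 ≤ |α₀| := abs_nonneg α₀
  -- Step 1: find ω > 0 with (ω²-α₀)² + α₁²ω² = β₂²
  obtain ⟨ω, hω, hωeq⟩ : ∃ ω > 0, (ω ^ 2 - α₀) ^ 2 + α₁ ^ 2 * ω ^ 2 = β₂ ^ 2 := by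
    set M : ℝ := |α₀| + β₂ + 1 with hM
    have hM1 : 1 ≤ M := by simp [hM]; linarith
    have hcont : ContinuousOn (fun x : ℝ => (x ^ 2 - α₀) ^ 2 + α₁ ^ 2 * x ^ 2)
        (Set.Icc 0 M) := by fun_prop
    have hmem : β₂ ^ 2 ∈ Set.Icc ((0 ^ 2 - α₀) ^ 2 + α₁ ^ 2 * 0 ^ 2)
        ((M ^ 2 - α₀) ^ 2 + α₁ ^ 2 * M ^ 2) := by
      constructor
      · have : α₀ ^ 2 < β₂ ^ 2 := by nlinarith
        simpa using this.le
      · have hMM : M ≤ M ^ 2 := by nlinarith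
        have h3 : β₂ + 1 ≤ M ^ 2 - α₀ := by
          have : β₂ + 1 = M - |α₀| := by simp [hM]; ring
          nlinarith
        nlinarith
    have := intermediate_value_Icc (by linarith : (0:ℝ) ≤ M) hcont hmem
    obtain ⟨x, hx, hfx⟩ := this
    refine ⟨x, ?_, hfx⟩
    rcases hx.1.lt_or_eq with h | h
    · exact h
    · exfalso
      rw [← h] at hfx
      simp at hfx
      nlinarith
  -- Step 2: the target point and its modulus
  set z : ℂ := ((ω ^ 2 - α₀ : ℝ) : ℂ) + ((-(α₁ * ω) : ℝ) : ℂ) * Complex.I with hz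
  have hβ₂ne : (β₂ : ℂ) ≠ 0 := by exact_mod_cast hβ₂.ne'
  have hzabs : ‖z‖ = β₂ := by
    have hnsq : Complex.normSq z = β₂ ^ 2 := by
      rw [hz, Complex.normSq_add_mul_I]
      nlinarith
    have : ‖z‖ = Real.sqrt (β₂ ^ 2) := by
      rw [Complex.norm_def, hnsq]
    rw [this, Real.sqrt_sq hβ₂.le]
  -- Step 3: the triangle construction
  set γ : ℝ := Real.arccos (β₁ / (2 * β₂)) with hγ
  have hcosγ : Real.cos γ = β₁ / (2 * β₂) := by
    apply Real.cos_arccos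
    · have : (0:ℝ) ≤ β₁ / (2 * β₂) := by positivity
      linarith
    · rw [div_le_one (by linarith)]; exact h₂
  have hsincos : Real.sin γ ^ 2 + Real.cos γ ^ 2 = 1 := Real.sin_sq_add_cos_sq γ
  set v : ℂ := Complex.exp ((γ : ℂ) * Complex.I) with hv
  have hvabs : ‖v‖ = 1 := Complex.norm_exp_ofReal_mul_I γ
  set u : ℂ := z / (β₂ : ℂ) with hu
  have huabs : ‖u‖ = 1 := by
    rw [hu, norm_div, hzabs, Complex.norm_real, Real.norm_eq_abs, abs_of_pos hβ₂, div_self hβ₂.ne']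
  set w₂ : ℂ := z - (β₁ : ℂ) * u * v with hw₂
  have hw₂abs : ‖w₂‖ = β₂ := by
    have hfac : w₂ = u * ((β₂ : ℂ) - (β₁ : ℂ) * v) := by
      rw [hw₂, hu]; field_simp
    have hvexp : (β₂ : ℂ) - (β₁ : ℂ) * v
        = ((β₂ - β₁ * Real.cos γ : ℝ) : ℂ) + ((-(β₁ * Real.sin γ) : ℝ) : ℂ) * Complex.I := by
      rw [hv, Complex.exp_mul_I]
      push_cast [Complex.ofReal_cos, Complex.ofReal_sin]
      ring
    have hnsq : Complex.normSq ((β₂ : ℂ) - (β₁ : ℂ) * v) = β₂ ^ 2 := by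
      rw [hvexp, Complex.normSq_add_mul_I]
      have hc : 2 * β₁ * β₂ * Real.cos γ = β₁ ^ 2 := by
        rw [hcosγ]; field_simp
      nlinarith
    have habs2 : ‖((β₂ : ℂ) - (β₁ : ℂ) * v)‖ = β₂ := by
      have : ‖((β₂ : ℂ) - (β₁ : ℂ) * v)‖ = Real.sqrt (β₂ ^ 2) := by
        rw [Complex.norm_def, hnsq]
      rw [this, Real.sqrt_sq hβ₂.le]
    rw [hfac, norm_mul, huabs, habs2, one_mul]
  -- Step 4: realize the two unit vectors as delayed exponentials
  obtain ⟨τ₁, hτ₁, hτ₁eq⟩ := exists_tau_unit ω hω (u * v) (by rw [norm_mul, huabs, hvabs, one_mul])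
  obtain ⟨τ₂, hτ₂, hτ₂eq⟩ := exists_tau_unit ω hω (w₂ / (β₂ : ℂ)) (by
    rw [norm_div, hw₂abs, Complex.norm_real, Real.norm_eq_abs, abs_of_pos hβ₂, div_self hβ₂.ne'])
  refine ⟨ω, τ₁, τ₂, hω, hτ₁, hτ₂, ?_⟩
  -- Step 5: verify
  unfold chi
  rw [show -(Complex.I * (ω : ℂ)) * (τ₁ : ℂ) = -(Complex.I * (ω : ℂ)) * (τ₁ : ℂ) from rfl]
  rw [hτ₁eq, hτ₂eq]
  have hzu : (β₂ : ℂ) * u = z := by rw [hu]; field_simp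
  have hkey : (β₁ : ℂ) * (u * v) + (β₂ : ℂ) * (w₂ / (β₂ : ℂ)) = z := by
    rw [mul_div_cancel₀ _ hβ₂ne, hw₂]; ring
  have hfin : (Complex.I * (ω : ℂ)) ^ 2 + (α₁ : ℂ) * (Complex.I * (ω : ℂ)) + (α₀ : ℂ) + z = 0 := by
    rw [hz]; push_cast; linear_combination ((ω:ℂ)^2) * Complex.I_sq
  linear_combination hkey + hfin
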